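/- For n ≥ 5 and d ≥ ⌊n/2⌋, the general d-position number of the cycle C_n equals 3. -/

import Mathlib

/-- `S` is a general `d`-position set of `G`: no three distinct vertices of `S`
lie on a common geodesic of length at most `d`. -/
def IsGenDPos {V : Type*} (G : SimpleGraph V) (d : ℕ) (S : Set V) : Prop :=
  ∀ ⦃u v w : V⦄, u ∈ S → v ∈ S → w ∈ S → u ≠ v → u ≠ w → v ≠ w →
    G.dist u v + G.dist v w = G.dist u w → G.dist u w ≤ d → False

/-- The general `d`-position number of `G`. -/
noncomputable def gpNum {V : Type*} (G : SimpleGraph V) (d : ℕ) : ℕ :=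
  sSup {n | ∃ S : Set V, IsGenDPos G d S ∧ S.ncard = n}

section Aux


open SimpleGraph
open Fin.CommRing

variable {n : ℕ} [NeZero n]

lemma sub_val_eq (hn : 0 < n) (a b : Fin n) : (a - b).val = (n - b.val + a.val) % n := by
  rw [Fin.sub_def]

lemma neg_val_eq (a : Fin n) : (-a).val = (n - a.val) % n := by
  rw [Fin.neg_def]

/-- distance-like function -/
def D (x : Fin n) : ℕ := min x.val ((-x).val)

lemma neg_val_eq' (a : Fin n) : (-a).val = if a.val = 0 then 0 else n - a.val := by
  rw [neg_val_eq]
  have h := a.isLt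
  split <;> rename_i h0
  · simp [h0, Nat.sub_zero, Nat.mod_self]
  · exact Nat.mod_eq_of_lt (by omega)

lemma sub_one_val (hn : 2 ≤ n) (a : Fin n) :
    (a - 1).val = if a.val = 0 then n - 1 else a.val - 1 := by
  rw [sub_val_eq (by omega)]
  have h := a.isLt
  have h1 : (1 : Fin n).val = 1 := by
    rw [Fin.val_one']; exact Nat.mod_eq_of_lt (by omega)
  rw [h1]
  split <;> rename_i h0
  · rw [h0]; exact Nat.mod_eq_of_lt (by omega)
  · rw [show n - 1 + a.val = n + (a.val - 1) by omega, Nat.add_mod_left]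
    exact Nat.mod_eq_of_lt (by omega)

lemma add_one_val (hn : 2 ≤ n) (a : Fin n) :
    (a + 1).val = if a.val = n - 1 then 0 else a.val + 1 := by
  rw [Fin.add_def]
  have h := a.isLt
  have h1 : (1 : Fin n).val = 1 := by
    rw [Fin.val_one']; exact Nat.mod_eq_of_lt (by omega)
  simp only [h1]
  split <;> rename_i h0
  · rw [h0, show n - 1 + 1 = n by omega, Nat.mod_self]
  · exact Nat.mod_eq_of_lt (by omega)


lemma D_sub_one (hn : 2 ≤ n) (a : Fin n) : D a ≤ D (a - 1) + 1 := by
  have h := a.isLt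
  have h2 := (a-1).isLt
  have hb := sub_one_val hn a
  have hna := neg_val_eq' a
  have hna1 := neg_val_eq' (a - 1)
  unfold D
  split_ifs at hb hna hna1 <;> omega

lemma D_add_one (hn : 2 ≤ n) (a : Fin n) : D a ≤ D (a + 1) + 1 := by
  have h := a.isLt
  have h2 := (a+1).isLt
  have hb := add_one_val hn a
  have hna := neg_val_eq' a
  have hna1 := neg_val_eq' (a + 1)
  unfold D
  split_ifs at hb hna hna1 <;> omega

lemma walk_length_ge (hn : 2 ≤ n) {u v : Fin n} (p : (cycleGraph n).Walk u v) :
    D (v - u) ≤ p.length := by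
  induction p with
  | nil => simp [D]
  | @cons a b c hab q ih =>
    rw [SimpleGraph.cycleGraph_adj'] at hab
    have h1 : ((1 : Fin n) : ℕ) = 1 := by rw [Fin.val_one']; exact Nat.mod_eq_of_lt (by omega)
    rcases hab with hab | hab
    · -- (a - b).val = 1, so a = b + 1, c - a = (c - b) - 1
      have hab' : a - b = 1 := Fin.ext (by rw [h1]; exact hab)
      have hca : c - a = (c - b) - 1 := by
        rw [← hab']; ring
      rw [Walk.length_cons, hca]
      have := D_add_one hn ((c - b) - 1)
      have he : (c - b) - 1 + 1 = c - b := by ring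
      rw [he] at this
      omega
    · have hab' : b - a = 1 := Fin.ext (by rw [h1]; exact hab)
      have hca : c - a = (c - b) + 1 := by
        rw [← hab']; ring
      rw [Walk.length_cons, hca]
      have := D_sub_one hn ((c - b) + 1)
      have he : (c - b) + 1 - 1 = c - b := by ring
      rw [he] at this
      omega

lemma exists_walk_plus (hn : 2 ≤ n) (k : ℕ) (u : Fin n) :
    ∃ p : (SimpleGraph.cycleGraph n).Walk u (u + (k : Fin n)), p.length = k := by
  induction k with
  | zero => exact ⟨Walk.nil.copy rfl (by simp), by simp⟩
  | succ m ih =>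
    obtain ⟨p, hp⟩ := ih
    have h1 : ((1 : Fin n) : ℕ) = 1 := by rw [Fin.val_one']; exact Nat.mod_eq_of_lt (by omega)
    have hadj : (SimpleGraph.cycleGraph n).Adj (u + (m : Fin n)) (u + ((m+1 : ℕ) : Fin n)) := by
      rw [SimpleGraph.cycleGraph_adj']
      right
      have : u + ((m+1 : ℕ) : Fin n) - (u + (m : Fin n)) = 1 := by
        push_cast
        ring
      rw [this, h1]
    exact ⟨p.concat hadj, by simp [hp]⟩

lemma cycle_dist_eq (hn : 2 ≤ n) (u v : Fin n) :
    (SimpleGraph.cycleGraph n).dist u v = D (v - u) := by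
  have hne : Nonempty (Fin n) := ⟨u⟩
  have hconn : (SimpleGraph.cycleGraph n).Connected :=
    ⟨SimpleGraph.cycleGraph_preconnected⟩
  apply le_antisymm
  · -- dist ≤ min: two walks
    have hle1 : (SimpleGraph.cycleGraph n).dist u v ≤ (v - u).val := by
      obtain ⟨p, hp⟩ := exists_walk_plus hn (v - u).val u
      have he : u + (((v-u).val : ℕ) : Fin n) = v := by
        rw [Fin.cast_val_eq_self]; ring
      have hw := SimpleGraph.dist_le p
      rw [hp, he] at hw
      exact hw
    have hle2 : (SimpleGraph.cycleGraph n).dist u v ≤ (u - v).val := by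
      rw [SimpleGraph.dist_comm]
      obtain ⟨p, hp⟩ := exists_walk_plus hn (u - v).val v
      have he : v + (((u-v).val : ℕ) : Fin n) = u := by
        rw [Fin.cast_val_eq_self]; ring
      have hw := SimpleGraph.dist_le p
      rw [hp, he] at hw
      exact hw
    have hneg : (-(v - u)) = u - v := by ring
    unfold D
    rw [hneg]
    omega
  · obtain ⟨p, hp⟩ := hconn.exists_walk_length_eq_dist u v
    rw [← hp]
    exact walk_length_ge hn p

lemma cycle_dist_mk (hn : 2 ≤ n) {x y : ℕ} (hxy : x ≤ y) (hy : y < n) :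
    (SimpleGraph.cycleGraph n).dist ⟨x, lt_of_le_of_lt hxy hy⟩ ⟨y, hy⟩
      = min (y - x) (n - (y - x)) := by
  rw [cycle_dist_eq hn]
  have hsub : ((⟨y, hy⟩ - ⟨x, lt_of_le_of_lt hxy hy⟩ : Fin n) : ℕ) = y - x := by
    rw [sub_val_eq (by omega)]
    simp only
    rw [show n - x + y = n + (y - x) by omega, Nat.add_mod_left]
    exact Nat.mod_eq_of_lt (by omega)
  unfold D
  rw [neg_val_eq', hsub]
  split_ifs <;> omega

lemma key (hn : 5 ≤ n) {x1 x2 x3 x4 : ℕ} (h12 : x1 < x2) (h23 : x2 < x3) (h34 : x3 < x4)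
    (h4 : x4 < n) :
    ∃ u v w : Fin n,
      (u.val = x1 ∨ u.val = x2 ∨ u.val = x3 ∨ u.val = x4) ∧
      (v.val = x1 ∨ v.val = x2 ∨ v.val = x3 ∨ v.val = x4) ∧
      (w.val = x1 ∨ w.val = x2 ∨ w.val = x3 ∨ w.val = x4) ∧
      u ≠ v ∧ u ≠ w ∧ v ≠ w ∧
      (SimpleGraph.cycleGraph n).dist u v + (SimpleGraph.cycleGraph n).dist v w
        = (SimpleGraph.cycleGraph n).dist u w ∧
      (SimpleGraph.cycleGraph n).dist u w ≤ n / 2 := by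
  have hn2 : 2 ≤ n := by omega
  by_cases hc : x3 - x1 ≤ n / 2
  · refine ⟨⟨x1, by omega⟩, ⟨x2, by omega⟩, ⟨x3, by omega⟩, by simp, by simp, by simp,
      Fin.ne_of_val_ne (by simp; omega), Fin.ne_of_val_ne (by simp; omega),
      Fin.ne_of_val_ne (by simp; omega), ?_, ?_⟩
    · rw [cycle_dist_mk hn2 (by omega : x1 ≤ x2) (by omega),
        cycle_dist_mk hn2 (by omega : x2 ≤ x3) (by omega),
        cycle_dist_mk hn2 (by omega : x1 ≤ x3) (by omega)]
      omega
    · rw [cycle_dist_mk hn2 (by omega : x1 ≤ x3) (by omega)]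
      omega
  · refine ⟨⟨x3, by omega⟩, ⟨x4, by omega⟩, ⟨x1, by omega⟩, by simp, by simp, by simp,
      Fin.ne_of_val_ne (by simp; omega), Fin.ne_of_val_ne (by simp; omega),
      Fin.ne_of_val_ne (by simp; omega), ?_, ?_⟩
    · rw [SimpleGraph.dist_comm (u := (⟨x4, by omega⟩ : Fin n)),
        SimpleGraph.dist_comm (u := (⟨x3, by omega⟩ : Fin n)) (v := (⟨x1, by omega⟩ : Fin n)),
        cycle_dist_mk hn2 (by omega : x3 ≤ x4) (by omega),
        cycle_dist_mk hn2 (by omega : x1 ≤ x4) (by omega),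
        cycle_dist_mk hn2 (by omega : x1 ≤ x3) (by omega)]
      omega
    · rw [SimpleGraph.dist_comm (u := (⟨x3, by omega⟩ : Fin n)) (v := (⟨x1, by omega⟩ : Fin n)),
        cycle_dist_mk hn2 (by omega : x1 ≤ x3) (by omega)]
      omega

lemma card_le_three {d : ℕ} (hn : 5 ≤ n) (hd : n / 2 ≤ d) (S : Set (Fin n))
    (hS : IsGenDPos (SimpleGraph.cycleGraph n) d S) : S.ncard ≤ 3 := by
  by_contra hlt
  push_neg at hlt
  have hfin : S.Finite := S.toFinite
  have hcard : 4 ≤ hfin.toFinset.card := by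
    rw [← Set.ncard_eq_toFinset_card S hfin]; omega
  obtain ⟨t, hts, htc⟩ := Finset.exists_subset_card_eq hcard
  have htS : ∀ p ∈ t, p ∈ S := fun p hp => (Set.Finite.mem_toFinset hfin).mp (hts hp)
  set t' := t.image Fin.val with ht'
  have ht'c : t'.card = 4 := by
    rw [ht', Finset.card_image_of_injective _ Fin.val_injective, htc]
  have hlen : (t'.sort (· ≤ ·)).length = 4 := by rw [Finset.length_sort]; exact ht'c
  have hsorted := (Finset.sortedLT_sort t').pairwise
  have hmem : ∀ x ∈ t'.sort (· ≤ ·), ∃ p ∈ t, p.val = x := by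
    intro x hx
    have := (Finset.mem_sort _).mp hx
    rw [ht', Finset.mem_image] at this
    exact this
  obtain ⟨a, b, c, e, hLeq⟩ : ∃ a b c e, t'.sort (· ≤ ·) = [a, b, c, e] := by
    match hL : t'.sort (· ≤ ·), hlen with
    | [a, b, c, e], _ => exact ⟨a, b, c, e, rfl⟩
  rw [hLeq] at hsorted hmem
  simp only [List.pairwise_cons, List.mem_cons, List.not_mem_nil, or_false,
    List.Pairwise.nil, and_true] at hsorted
  obtain ⟨pa, hpat, hpa⟩ := hmem a (by simp)
  obtain ⟨pb, hpbt, hpb⟩ := hmem b (by simp)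
  obtain ⟨pc, hpct, hpc⟩ := hmem c (by simp)
  obtain ⟨pe, hpet, hpe⟩ := hmem e (by simp)
  have hab : a < b := by tauto
  have hbc : b < c := by tauto
  have hce : c < e := by tauto
  have hen : e < n := hpe ▸ pe.isLt
  obtain ⟨u, v, w, hu, hv, hw, huv, huw, hvw, hsum, hle⟩ := key hn hab hbc hce hen
  have resolve : ∀ z : Fin n, (z.val = a ∨ z.val = b ∨ z.val = c ∨ z.val = e) → z ∈ S := by
    intro z hz
    rcases hz with h | h | h | h
    · exact (Fin.ext (h.trans hpa.symm) : z = pa) ▸ htS pa hpat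
    · exact (Fin.ext (h.trans hpb.symm) : z = pb) ▸ htS pb hpbt
    · exact (Fin.ext (h.trans hpc.symm) : z = pc) ▸ htS pc hpct
    · exact (Fin.ext (h.trans hpe.symm) : z = pe) ▸ htS pe hpet
  exact hS (resolve u hu) (resolve v hv) (resolve w hw) huv huw hvw hsum (le_trans hle hd)

lemma exists_three {d : ℕ} (hn : 5 ≤ n) :
    ∃ S : Set (Fin n), IsGenDPos (SimpleGraph.cycleGraph n) d S ∧ S.ncard = 3 := by
  have hn2 : 2 ≤ n := by omega
  set k := (n + 1) / 3 with hk
  have h0 : (0 : ℕ) < n := by omega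
  have hk1 : k < n := by omega
  have hk2 : 2 * k < n := by omega
  refine ⟨{⟨0, h0⟩, ⟨k, hk1⟩, ⟨2 * k, hk2⟩}, ?_, ?_⟩
  · have d1 : (SimpleGraph.cycleGraph n).dist ⟨0, h0⟩ ⟨k, hk1⟩ = min k (n - k) := by
      have := cycle_dist_mk hn2 (Nat.zero_le k) hk1
      simpa using this
    have d2 : (SimpleGraph.cycleGraph n).dist ⟨k, hk1⟩ ⟨2 * k, hk2⟩ = min k (n - k) := by
      have := cycle_dist_mk hn2 (by omega : k ≤ 2 * k) hk2
      rw [show 2 * k - k = k by omega] at this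
      exact this
    have d3 : (SimpleGraph.cycleGraph n).dist ⟨0, h0⟩ ⟨2 * k, hk2⟩
        = min (2 * k) (n - 2 * k) := by
      have := cycle_dist_mk hn2 (Nat.zero_le (2 * k)) hk2
      simpa using this
    have d1' : (SimpleGraph.cycleGraph n).dist ⟨k, hk1⟩ ⟨0, h0⟩ = min k (n - k) := by
      rw [SimpleGraph.dist_comm]; exact d1
    have d2' : (SimpleGraph.cycleGraph n).dist ⟨2 * k, hk2⟩ ⟨k, hk1⟩ = min k (n - k) := by
      rw [SimpleGraph.dist_comm]; exact d2
    have d3' : (SimpleGraph.cycleGraph n).dist ⟨2 * k, hk2⟩ ⟨0, h0⟩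
        = min (2 * k) (n - 2 * k) := by
      rw [SimpleGraph.dist_comm]; exact d3
    intro u v w hu hv hw h1 h2 h3 hsum hle
    simp only [Set.mem_insert_iff, Set.mem_singleton_iff] at hu hv hw
    rcases hu with rfl | rfl | rfl <;> rcases hv with rfl | rfl | rfl <;>
      rcases hw with rfl | rfl | rfl <;>
      first
        | exact h1 rfl
        | exact h2 rfl
        | exact h3 rfl
        | (simp only [d1, d2, d3, d1', d2', d3'] at hsum; omega)
  · rw [Set.ncard_eq_three]
    exact ⟨_, _, _, Fin.ne_of_val_ne (by simp; omega), Fin.ne_of_val_ne (by simp; omega),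
      Fin.ne_of_val_ne (by simp; omega), rfl⟩

end Aux

/-- For d ≥ ⌊n/2⌋ the general d-position number of the cycle C_n equals 3. -/
theorem stmt_7 (n d : ℕ) (hn : 5 ≤ n) (hd : n / 2 ≤ d) :
    gpNum (SimpleGraph.cycleGraph n) d = 3 := by
  have hNZ : NeZero n := ⟨by omega⟩
  have hub : ∀ m ∈ {m | ∃ S : Set (Fin n),
      IsGenDPos (SimpleGraph.cycleGraph n) d S ∧ S.ncard = m}, m ≤ 3 := by
    rintro m ⟨S, hS, rfl⟩
    exact card_le_three hn hd S hS
  obtain ⟨S, hS, hSc⟩ := exists_three (d := d) hn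
  have hmem : 3 ∈ {m | ∃ S : Set (Fin n),
      IsGenDPos (SimpleGraph.cycleGraph n) d S ∧ S.ncard = m} := ⟨S, hS, hSc⟩
  exact le_antisymm (csSup_le ⟨3, hmem⟩ hub) (le_csSup ⟨3, hub⟩ hmem)
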